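/- As F_2-vector spaces, τ(N_1(2j)) = (N_2(j-2) ⊗ (A(2) // A(1))_*) ⊕ (M_2(j-1) ⊗ F_2{1, ξ̄_1^4, ξ̄_2^2, ξ̄_3, ξ̄_1^4 ξ̄_2^2, ξ̄_1^4 ξ̄_3, ξ̄_2^2 ξ̄_3}) ⊕ (M_2(j) ⊗ F_2{1}), i.e. the monomials of N_1(2j) split according to their degree-8 part and exterior residue, with only the top-weight exterior class ξ̄_1^4 ξ̄_2^2 ξ̄_3 omitted in the M_2(j-1) factor and only 1 allowed in the M_2(j) factor. -/

import Mathlib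

open TensorProduct

/-- The mod 2 dual Steenrod algebra on the conjugate generators:
`MvPolynomial.X k` represents `ξ̄_{k+1}`. -/
abbrev DualSteenrod : Type := MvPolynomial ℕ (ZMod 2)

/-- Brown-Gitler weight: `ξ̄_{k+1}` has weight `2^k`. -/
def bgWeight (d : ℕ →₀ ℕ) : ℕ := d.sum fun k e => e * 2 ^ k

/-- Exterior residue `(4ε₁, 2ε₂, ε₃, 0, …)` of an exponent. -/
noncomputable def dLow (d : ℕ →₀ ℕ) : ℕ →₀ ℕ :=
  Finsupp.single 0 (d 0 % 8) + Finsupp.single 1 (d 1 % 4) + Finsupp.single 2 (d 2 % 2)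

/-- 2-divisible part `(8i₁, 4i₂, 2i₃, i₄, …)` of an exponent. -/
noncomputable def dHigh (d : ℕ →₀ ℕ) : ℕ →₀ ℕ := d - dLow d

/-- The monomial-splitting map `τ : (A ⫽ A(1))_* → (A ⫽ A(2))_* ⊗ (A(2) ⫽ A(1))_*`. -/
noncomputable def tau : DualSteenrod →ₗ[ZMod 2] DualSteenrod ⊗[ZMod 2] DualSteenrod :=
  (MvPolynomial.basisMonomials ℕ (ZMod 2)).constr (ZMod 2) fun d =>
    (MvPolynomial.monomial (dHigh d) 1) ⊗ₜ[ZMod 2] (MvPolynomial.monomial (dLow d) 1)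

def isAA1 (d : ℕ →₀ ℕ) : Prop := 4 ∣ d 0 ∧ 2 ∣ d 1

def isAA2 (d : ℕ →₀ ℕ) : Prop := 8 ∣ d 0 ∧ 4 ∣ d 1 ∧ 2 ∣ d 2

def isExtMono (d : ℕ →₀ ℕ) : Prop :=
  (d 0 = 0 ∨ d 0 = 4) ∧ (d 1 = 0 ∨ d 1 = 2) ∧ d 2 ≤ 1 ∧ ∀ k, 3 ≤ k → d k = 0

/-- The bo-Brown-Gitler comodule `N₁(m)`: span of monomials of `(A ⫽ A(1))_*` of
Brown-Gitler filtration at most `4m`. -/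
noncomputable def N1 (m : ℕ) : Submodule (ZMod 2) DualSteenrod :=
  Submodule.span (ZMod 2)
    {x | ∃ d, isAA1 d ∧ bgWeight d ≤ 4 * m ∧ x = MvPolynomial.monomial d 1}

/-- Exterior monomials in `N₁(1) = F₂{1, ξ̄_1^4, ξ̄_2^2, ξ̄_3}`. -/
def isN11Mono (d : ℕ →₀ ℕ) : Prop := isExtMono d ∧ bgWeight d ≤ 4

/-- `N₂(j-2) ⊗ (A(2) ⫽ A(1))_*`: basis tensors whose left factor has Brown-Gitler
weight at most `8(j-2)` (the condition is written as `wt a + 16 ≤ 8j`, so that the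
piece is empty when `j = 1`). -/
noncomputable def T1 (j : ℕ) : Submodule (ZMod 2) (DualSteenrod ⊗[ZMod 2] DualSteenrod) :=
  Submodule.span (ZMod 2)
    {t | ∃ a b : ℕ →₀ ℕ, isAA2 a ∧ bgWeight a + 16 ≤ 8 * j ∧ isExtMono b ∧
      t = (MvPolynomial.monomial a 1) ⊗ₜ[ZMod 2] (MvPolynomial.monomial b 1)}

/-- `M₂(j-1) ⊗ F₂{1, ξ̄_1^4, ξ̄_2^2, ξ̄_3, ξ̄_1^4ξ̄_2^2, ξ̄_1^4ξ̄_3, ξ̄_2^2ξ̄_3}`: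
left weight exactly `8(j-1)` and the top exterior class `ξ̄_1^4ξ̄_2^2ξ̄_3` (of
Brown-Gitler weight 12) omitted, i.e. right weight at most 8. -/
noncomputable def T2 (j : ℕ) : Submodule (ZMod 2) (DualSteenrod ⊗[ZMod 2] DualSteenrod) :=
  Submodule.span (ZMod 2)
    {t | ∃ a b : ℕ →₀ ℕ, isAA2 a ∧ bgWeight a = 8 * (j - 1) ∧ isExtMono b ∧ bgWeight b ≤ 8 ∧
      t = (MvPolynomial.monomial a 1) ⊗ₜ[ZMod 2] (MvPolynomial.monomial b 1)}

/-- `M₂(j) ⊗ F₂{1}`: left weight exactly `8j`, right factor `1`. -/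
noncomputable def T3 (j : ℕ) : Submodule (ZMod 2) (DualSteenrod ⊗[ZMod 2] DualSteenrod) :=
  Submodule.span (ZMod 2)
    {t | ∃ a : ℕ →₀ ℕ, isAA2 a ∧ bgWeight a = 8 * j ∧
      t = (MvPolynomial.monomial a 1) ⊗ₜ[ZMod 2] (1 : DualSteenrod)}

lemma tau_monomial (d : ℕ →₀ ℕ) :
    tau (MvPolynomial.monomial d 1) =
      (MvPolynomial.monomial (dHigh d) 1) ⊗ₜ[ZMod 2] (MvPolynomial.monomial (dLow d) 1) := by
  have h : MvPolynomial.basisMonomials ℕ (ZMod 2) d = MvPolynomial.monomial d 1 :=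
    congrFun (MvPolynomial.coe_basisMonomials ℕ (ZMod 2)) d
  rw [← h, tau, Module.Basis.constr_basis]

lemma bgWeight_add (a b : ℕ →₀ ℕ) : bgWeight (a + b) = bgWeight a + bgWeight b :=
  Finsupp.sum_add_index (by simp) (by intros; ring)

lemma bgWeight_single (k n : ℕ) : bgWeight (Finsupp.single k n) = n * 2 ^ k :=
  Finsupp.sum_single_index (by simp)

lemma dLow_apply (d : ℕ →₀ ℕ) (k : ℕ) :
    dLow d k = if k = 0 then d 0 % 8 else if k = 1 then d 1 % 4 else if k = 2 then d 2 % 2 else 0 := by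
  rcases k with _|_|_|k <;> simp [dLow, Finsupp.single_apply]

lemma dLow_le (d : ℕ →₀ ℕ) (k : ℕ) : dLow d k ≤ d k := by
  rw [dLow_apply]
  rcases k with _|_|_|k <;> simp <;> omega

lemma dHigh_apply (d : ℕ →₀ ℕ) (k : ℕ) : dHigh d k = d k - dLow d k := by
  simp [dHigh, Finsupp.tsub_apply]

lemma dHigh_add_dLow (d : ℕ →₀ ℕ) : dHigh d + dLow d = d := by
  ext k
  have := dLow_le d k
  simp [dHigh_apply]
  omega

lemma bgWeight_low (b : ℕ →₀ ℕ) (hb : ∀ k, 3 ≤ k → b k = 0) :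
    bgWeight b = b 0 + b 1 * 2 + b 2 * 4 := by
  have hs : b.support ⊆ ({0, 1, 2} : Finset ℕ) := by
    intro k hk
    simp only [Finset.mem_insert, Finset.mem_singleton]
    by_contra h
    push_neg at h
    exact (Finsupp.mem_support_iff.mp hk) (hb k (by omega))
  rw [bgWeight, Finsupp.sum_of_support_subset _ hs _ (by simp)]
  simp [Finset.sum_insert]
  ring

lemma bgWeight_dLow (d : ℕ →₀ ℕ) :
    bgWeight (dLow d) = d 0 % 8 + (d 1 % 4) * 2 + (d 2 % 2) * 4 := by
  rw [bgWeight_low _ (fun k hk => by rw [dLow_apply]; split_ifs <;> omega)]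
  simp [dLow_apply]

lemma isExtMono_dLow (d : ℕ →₀ ℕ) (h : isAA1 d) : isExtMono (dLow d) := by
  obtain ⟨⟨m, hm⟩, n, hn⟩ := h
  refine ⟨?_, ?_, ?_, fun k hk => by rw [dLow_apply]; split_ifs <;> omega⟩ <;> rw [dLow_apply] <;> simp <;> omega

lemma isAA2_dHigh (d : ℕ →₀ ℕ) : isAA2 (dHigh d) := by
  refine ⟨?_, ?_, ?_⟩ <;> rw [dHigh_apply, dLow_apply] <;> simp <;> omega

lemma dvd_bgWeight (a : ℕ →₀ ℕ) (h : isAA2 a) : 8 ∣ bgWeight a := by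
  obtain ⟨h0, h1, h2⟩ := h
  apply Finset.dvd_sum
  intro k _
  rcases k with _|_|_|k
  · simpa using h0
  · obtain ⟨m, hm⟩ := h1; exact ⟨m, by simp [hm]; ring⟩
  · obtain ⟨m, hm⟩ := h2; exact ⟨m, by simp [hm]; ring⟩
  · exact Dvd.dvd.mul_left ⟨2 ^ k, by ring⟩ _

lemma dLow_add (a b : ℕ →₀ ℕ) (ha : isAA2 a) (hb : isExtMono b) : dLow (a + b) = b := by
  obtain ⟨⟨m0, h0⟩, ⟨m1, h1⟩, m2, h2⟩ := ha
  obtain ⟨e0, e1, e2, e3⟩ := hb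
  ext k
  rw [dLow_apply]
  rcases k with _|_|_|k
  · simp [Finsupp.add_apply] at *; omega
  · simp [Finsupp.add_apply] at *; omega
  · simp [Finsupp.add_apply] at *; omega
  · simp only [if_neg (by omega : ¬(k+3:ℕ) = 0), if_neg (by omega : ¬(k+3:ℕ) = 1),
      if_neg (by omega : ¬(k+3:ℕ) = 2)]
    exact (e3 _ (by omega)).symm

lemma dHigh_add (a b : ℕ →₀ ℕ) (ha : isAA2 a) (hb : isExtMono b) : dHigh (a + b) = a := by
  rw [dHigh, dLow_add a b ha hb]
  ext k
  simp [Finsupp.tsub_apply]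


lemma isAA1_add (a b : ℕ →₀ ℕ) (ha : isAA2 a) (hb : isExtMono b) : isAA1 (a + b) := by
  obtain ⟨⟨m0, h0⟩, ⟨m1, h1⟩, m2, h2⟩ := ha
  obtain ⟨e0, e1, e2, e3⟩ := hb
  constructor <;> simp [Finsupp.add_apply, h0, h1] <;> omega

lemma isExtMono_zero : isExtMono 0 := by
  refine ⟨Or.inl rfl, Or.inl rfl, ?_, fun k _ => rfl⟩ ; simp

lemma bgWeight_zero : bgWeight 0 = 0 := by simp [bgWeight]

lemma bgWeight_ext_le (b : ℕ →₀ ℕ) (hb : isExtMono b) : bgWeight b ≤ 12 := by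
  obtain ⟨e0, e1, e2, e3⟩ := hb
  rw [bgWeight_low b e3]; omega

lemma mem_map_tau (j : ℕ) (a b : ℕ →₀ ℕ) (ha : isAA2 a) (hb : isExtMono b)
    (hw : bgWeight a + bgWeight b ≤ 8 * j) :
    (MvPolynomial.monomial a 1) ⊗ₜ[ZMod 2] (MvPolynomial.monomial b 1) ∈
      Submodule.map tau (N1 (2 * j)) := by
  have h1 : tau (MvPolynomial.monomial (a + b) 1) =
      (MvPolynomial.monomial a 1) ⊗ₜ[ZMod 2] (MvPolynomial.monomial b 1) := by
    rw [tau_monomial, dHigh_add a b ha hb, dLow_add a b ha hb]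
  refine ⟨MvPolynomial.monomial (a + b) 1, Submodule.subset_span ⟨a + b, isAA1_add a b ha hb,
    ?_, rfl⟩, h1⟩
  rw [bgWeight_add]; omega

noncomputable def BB : Module.Basis ((ℕ →₀ ℕ) × (ℕ →₀ ℕ)) (ZMod 2)
    (DualSteenrod ⊗[ZMod 2] DualSteenrod) :=
  (MvPolynomial.basisMonomials ℕ (ZMod 2)).tensorProduct (MvPolynomial.basisMonomials ℕ (ZMod 2))

lemma BB_apply (a b : ℕ →₀ ℕ) :
    BB (a, b) = (MvPolynomial.monomial a 1) ⊗ₜ[ZMod 2] (MvPolynomial.monomial b 1) := by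
  rw [BB, Module.Basis.tensorProduct_apply]
  rw [congrFun (MvPolynomial.coe_basisMonomials ℕ (ZMod 2)) a,
    congrFun (MvPolynomial.coe_basisMonomials ℕ (ZMod 2)) b]

def S1 (j : ℕ) : Set ((ℕ →₀ ℕ) × (ℕ →₀ ℕ)) :=
  {p | isAA2 p.1 ∧ bgWeight p.1 + 16 ≤ 8 * j ∧ isExtMono p.2}
def S2 (j : ℕ) : Set ((ℕ →₀ ℕ) × (ℕ →₀ ℕ)) :=
  {p | isAA2 p.1 ∧ bgWeight p.1 = 8 * (j - 1) ∧ isExtMono p.2 ∧ bgWeight p.2 ≤ 8}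
def S3 (j : ℕ) : Set ((ℕ →₀ ℕ) × (ℕ →₀ ℕ)) :=
  {p | isAA2 p.1 ∧ bgWeight p.1 = 8 * j ∧ p.2 = 0}

lemma monomial_zero_one : (MvPolynomial.monomial (0 : ℕ →₀ ℕ) (1 : ZMod 2)) = 1 := by
  simp [MvPolynomial.monomial_zero']

lemma T1_eq (j : ℕ) : T1 j = Submodule.span (ZMod 2) (⇑BB '' S1 j) := by
  rw [T1]; congr 1; ext t
  constructor
  · rintro ⟨a, b, h1, h2, h3, rfl⟩; exact ⟨(a, b), ⟨h1, h2, h3⟩, (BB_apply a b)⟩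
  · rintro ⟨⟨a, b⟩, ⟨h1, h2, h3⟩, rfl⟩; exact ⟨a, b, h1, h2, h3, BB_apply a b⟩

lemma T2_eq (j : ℕ) : T2 j = Submodule.span (ZMod 2) (⇑BB '' S2 j) := by
  rw [T2]; congr 1; ext t
  constructor
  · rintro ⟨a, b, h1, h2, h3, h4, rfl⟩; exact ⟨(a, b), ⟨h1, h2, h3, h4⟩, (BB_apply a b)⟩
  · rintro ⟨⟨a, b⟩, ⟨h1, h2, h3, h4⟩, rfl⟩; exact ⟨a, b, h1, h2, h3, h4, BB_apply a b⟩

lemma T3_eq (j : ℕ) : T3 j = Submodule.span (ZMod 2) (⇑BB '' S3 j) := by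
  rw [T3]; congr 1; ext t
  constructor
  · rintro ⟨a, h1, h2, rfl⟩
    exact ⟨(a, 0), ⟨h1, h2, rfl⟩, by rw [BB_apply, monomial_zero_one]⟩
  · rintro ⟨⟨a, b⟩, ⟨h1, h2, h3⟩, rfl⟩
    refine ⟨a, h1, h2, ?_⟩
    rw [BB_apply]; simp only at h3; rw [h3, monomial_zero_one]


/-- as `F₂`-vector spaces,
`τ(N₁(2j)) = (N₂(j-2) ⊗ (A(2) ⫽ A(1))_*) ⊕
(M₂(j-1) ⊗ F₂{1, ξ̄_1^4, ξ̄_2^2, ξ̄_3, ξ̄_1^4ξ̄_2^2, ξ̄_1^4ξ̄_3, ξ̄_2^2ξ̄_3}) ⊕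
(M₂(j) ⊗ F₂{1})`. -/
theorem stmt16 (j : ℕ) (hj : 1 ≤ j) :
    Submodule.map tau (N1 (2 * j)) = T1 j ⊔ T2 j ⊔ T3 j ∧
    Disjoint (T1 j) (T2 j) ∧ Disjoint (T1 j ⊔ T2 j) (T3 j) := by
  refine ⟨?_, ?_, ?_⟩
  · apply le_antisymm
    · rw [N1, Submodule.map_span, Submodule.span_le]
      rintro _ ⟨x, ⟨d, hd1, hd2, rfl⟩, rfl⟩
      rw [tau_monomial]
      have ha := isAA2_dHigh d
      have hb := isExtMono_dLow d hd1
      have hw : bgWeight (dHigh d) + bgWeight (dLow d) = bgWeight d := by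
        rw [← bgWeight_add, dHigh_add_dLow]
      obtain ⟨m, hm⟩ := dvd_bgWeight _ ha
      by_cases h1 : bgWeight (dHigh d) + 16 ≤ 8 * j
      · exact Submodule.mem_sup_left (Submodule.mem_sup_left
          (Submodule.subset_span ⟨_, _, ha, h1, hb, rfl⟩))
      · have hcase : bgWeight (dHigh d) = 8 * (j - 1) ∨ bgWeight (dHigh d) = 8 * j := by
          omega
        rcases hcase with hc | hc
        · have hb8 : bgWeight (dLow d) ≤ 8 := by omega
          exact Submodule.mem_sup_left (Submodule.mem_sup_right
            (Submodule.subset_span ⟨_, _, ha, hc, hb, hb8, rfl⟩))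
        · have hb0 : bgWeight (dLow d) = 0 := by omega
          have hlz : dLow d = 0 := by
            rw [bgWeight_low _ hb.2.2.2] at hb0
            ext k
            simp only [Finsupp.coe_zero, Pi.zero_apply]
            rcases k with _|_|_|k
            · omega
            · show dLow d 1 = 0; omega
            · show dLow d 2 = 0; omega
            · exact hb.2.2.2 _ (by omega)
          rw [hlz, monomial_zero_one]
          exact Submodule.mem_sup_right (Submodule.subset_span ⟨_, ha, hc, rfl⟩)
    · refine sup_le (sup_le ?_ ?_) ?_
      · rw [T1, Submodule.span_le]
        rintro _ ⟨a, b, h1, h2, h3, rfl⟩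
        exact mem_map_tau j a b h1 h3 (by have := bgWeight_ext_le b h3; omega)
      · rw [T2, Submodule.span_le]
        rintro _ ⟨a, b, h1, h2, h3, h4, rfl⟩
        exact mem_map_tau j a b h1 h3 (by omega)
      · rw [T3, Submodule.span_le]
        rintro _ ⟨a, h1, h2, rfl⟩
        rw [← monomial_zero_one]
        exact mem_map_tau j a 0 h1 isExtMono_zero (by rw [bgWeight_zero]; omega)
  · rw [T1_eq, T2_eq]
    refine BB.linearIndependent.disjoint_span_image ?_
    rw [Set.disjoint_left]
    rintro p ⟨_, h2, _⟩ ⟨_, h2', _⟩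
    omega
  · rw [T1_eq, T2_eq, T3_eq, ← Submodule.span_union, ← Set.image_union]
    refine BB.linearIndependent.disjoint_span_image ?_
    rw [Set.disjoint_left]
    rintro p (⟨_, h2, _⟩ | ⟨_, h2, _⟩) ⟨_, h2', _⟩ <;> omega
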